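/- arXiv:2306.16202 — 10 statements merged into one kernel-verified Lean document; each statement's English description precedes it below -/
import Mathlib

section
/- For every positive integer m, T_{2m+1}(2m+1) < 0, where T_n(x) = \sum_{k=0}^n (-x)^k / k!. -/
noncomputable def T (n : ℕ) (x : ℝ) : ℝ := ∑ k ∈ Finset.range (n + 1), (-x) ^ k / (Nat.factorial k)

lemma pair_sum (f : ℕ → ℝ) (n : ℕ) :
    ∑ k ∈ Finset.range (2 * n), f k = ∑ j ∈ Finset.range n, (f (2 * j) + f (2 * j + 1)) := by
  induction n with
  | zero => simp
  | succ n ih =>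
    rw [Finset.sum_range_succ, ← ih, Nat.mul_succ]
    rw [Finset.sum_range_succ, Finset.sum_range_succ]
    ring_nf

theorem stmt5 (m : ℕ) (hm : 1 ≤ m) : T (2 * m + 1) (2 * m + 1) < 0 := by
  set x : ℝ := 2 * (m:ℝ) + 1 with hx
  have hx1 : (1:ℝ) ≤ x := by
    have : (0:ℝ) ≤ (m:ℝ) := Nat.cast_nonneg m
    simp only [hx]; linarith
  have hxpos : 0 < x := lt_of_lt_of_le one_pos hx1
  unfold T
  have h22 : 2 * m + 1 + 1 = 2 * (m + 1) := by ring
  rw [h22, pair_sum]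
  have key : ∀ j ∈ Finset.range (m + 1),
      (-x) ^ (2 * j) / (Nat.factorial (2 * j)) + (-x) ^ (2 * j + 1) / (Nat.factorial (2 * j + 1)) ≤ 0 := by
    intro j hj
    have hjm : j ≤ m := Nat.lt_succ_iff.mp (Finset.mem_range.mp hj)
    have he : (-x) ^ (2 * j) = x ^ (2 * j) := by
      rw [pow_mul, pow_mul, neg_sq]
    have ho : (-x) ^ (2 * j + 1) = -(x ^ (2 * j + 1)) := by
      rw [pow_succ, he, pow_succ]; ring
    rw [he, ho, neg_div]
    have hfac1 : (0:ℝ) < (Nat.factorial (2 * j)) := by positivity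
    have hfac2 : (0:ℝ) < (Nat.factorial (2 * j + 1)) := by positivity
    have hle : x ^ (2 * j) / (Nat.factorial (2 * j)) ≤ x ^ (2 * j + 1) / (Nat.factorial (2 * j + 1)) := by
      rw [div_le_div_iff₀ hfac1 hfac2]
      have hfs : (Nat.factorial (2 * j + 1) : ℝ) = (2 * j + 1) * Nat.factorial (2 * j) := by
        rw [Nat.factorial_succ]; push_cast; ring
      rw [hfs, pow_succ]
      have h1 : (2 * (j:ℝ) + 1) ≤ x := by
        simp only [hx]; push_cast
        have : (j:ℝ) ≤ m := by exact_mod_cast hjm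
        linarith
      have hp : (0:ℝ) < x ^ (2 * j) := pow_pos hxpos _
      nlinarith [mul_le_mul_of_nonneg_right (mul_le_mul_of_nonneg_left h1 hp.le) hfac1.le]
    linarith
  have h0 : (-x) ^ (2 * 0) / (Nat.factorial (2 * 0)) + (-x) ^ (2 * 0 + 1) / (Nat.factorial (2 * 0 + 1)) < 0 := by
    simp only [mul_zero, pow_zero, pow_one, Nat.factorial]
    have h1m : (1:ℝ) ≤ (m:ℝ) := by exact_mod_cast hm
    simp only [hx]
    norm_num
    linarith
  calc ∑ j ∈ Finset.range (m + 1),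
        ((-x) ^ (2 * j) / (Nat.factorial (2 * j)) + (-x) ^ (2 * j + 1) / (Nat.factorial (2 * j + 1)))
      < ∑ j ∈ Finset.range (m + 1), (0:ℝ) := by
        apply Finset.sum_lt_sum key
        exact ⟨0, Finset.mem_range.mpr (Nat.succ_pos m), h0⟩
    _ = 0 := by simp
end

section
/- Let c_{2m-1} denote the unique positive root of T_{2m-1}(x) = \sum_{k=0}^{2m-1}(-x)^k/k!. Then c_1 = 1 and the sequence is strictly increasing: c_{2m-1} < c_{2m+1} for all m \ge 1. -/
lemma T_succ_succ (n : ℕ) (x : ℝ) :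
    T (n + 2) x = T n x + (-x) ^ (n+1) / (Nat.factorial (n+1))
      + (-x) ^ (n+2) / (Nat.factorial (n+2)) := by
  simp [T, Finset.sum_range_succ]

lemma pow_div_fact_succ (n : ℕ) (x : ℝ) :
    x ^ (n+1) / (Nat.factorial (n+1)) = x ^ n / (Nat.factorial n) * (x / (n+1)) := by
  rw [Nat.factorial_succ]
  have h1 : (Nat.factorial n : ℝ) ≠ 0 := Nat.cast_ne_zero.mpr (Nat.factorial_ne_zero n)
  have h2 : ((n:ℝ)+1) ≠ 0 := by positivity
  push_cast
  field_simp
  ring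

lemma T_cont (n : ℕ) : Continuous fun x : ℝ => T n x := by
  unfold T
  continuity

lemma T_zero (n : ℕ) : T n 0 = 1 := by
  rw [T, Finset.sum_eq_single 0]
  · simp
  · intro k _ hk
    simp [zero_pow hk]
  · intro h
    simp at h

lemma T_odd_neg : ∀ m : ℕ, ∀ x : ℝ, 1 < x → (2*m+1 : ℝ) ≤ x → T (2*m+1) x < 0 := by
  intro m
  induction m with
  | zero =>
    intro x hx _
    simp [T, Finset.sum_range_succ]
    linarith
  | succ k ih =>
    intro x hx hle
    have hle' : ((2*k+3 : ℕ) : ℝ) ≤ x := by push_cast at hle ⊢; linarith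
    have hidx : 2*(k+1)+1 = (2*k+1)+2 := by ring
    rw [hidx, T_succ_succ]
    have heven : (-x) ^ (2*k+1+1) = x ^ (2*k+2) := by
      have : (2*k+1+1) = 2*(k+1) := by ring
      rw [this]
      exact Even.neg_pow ⟨k+1, by ring⟩ x
    have hodd : (-x) ^ (2*k+1+2) = -(x ^ (2*k+3)) := by
      have : (2*k+1+2) = 2*k+3 := by ring
      rw [this]
      exact Odd.neg_pow ⟨k+1, by ring⟩ x
    rw [heven, hodd]
    have hIH : T (2*k+1) x < 0 := by
      apply ih x hx
      push_cast at hle' ⊢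
      linarith
    have hx0 : (0:ℝ) < x := by linarith
    have hpair : x ^ (2*k+3) / (Nat.factorial (2*k+3)) ≥ x ^ (2*k+2) / (Nat.factorial (2*k+2)) := by
      have := pow_div_fact_succ (2*k+2) x
      have h23 : ((2*k+2 : ℕ) : ℝ) + 1 = (2*k+3 : ℝ) := by push_cast; ring
      have hone : (1:ℝ) ≤ x / (2*(k:ℝ)+3) := by
        rw [le_div_iff₀ (by positivity)]
        push_cast at hle'
        linarith
      have hbase : (0:ℝ) < x ^ (2*k+2) / (Nat.factorial (2*k+2)) := by positivity
      have hsucc : x ^ (2*k+3) / (Nat.factorial (2*k+3)) =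
          x ^ (2*k+2) / (Nat.factorial (2*k+2)) * (x / (2*(k:ℝ)+3)) := by
        have h1 : 2*k+2+1 = 2*k+3 := by ring
        rw [← h1]
        rw [pow_div_fact_succ (2*k+2) x]
        push_cast
        ring_nf
      rw [hsucc]
      nlinarith
    have hfc : (0:ℝ) < (Nat.factorial (2*k+3) : ℝ) := by positivity
    have h1 : 2*k+1+1 = 2*k+2 := by ring
    have h2 : 2*k+1+2 = 2*k+3 := by ring
    rw [h1, h2]
    have : -(x ^ (2*k+3)) / (Nat.factorial (2*k+3)) = -(x ^ (2*k+3) / (Nat.factorial (2*k+3))) := by ring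
    rw [this]
    linarith

theorem stmt6 (c : ℕ → ℝ)
    (hroot : ∀ m : ℕ, 1 ≤ m → c m ∈ Set.Ioi (0 : ℝ) ∧ T (2 * m - 1) (c m) = 0)
    (huniq : ∀ m : ℕ, 1 ≤ m → ∀ x : ℝ, x ∈ Set.Ioi (0 : ℝ) → T (2 * m - 1) x = 0 → x = c m) :
    c 1 = 1 ∧ ∀ m : ℕ, 1 ≤ m → c m < c (m + 1) := by
  constructor
  · obtain ⟨hpos, hz⟩ := hroot 1 le_rfl
    norm_num [T, Finset.sum_range_succ] at hz
    linarith
  · intro m hm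
    obtain ⟨k, rfl⟩ : ∃ k, m = k + 1 := ⟨m - 1, by omega⟩
    set a := c (k + 1 + 1) with ha_def
    obtain ⟨hapos, haz⟩ := hroot (k+1+1) (by omega)
    have hidx2 : 2 * (k+1+1) - 1 = 2*(k+1)+1 := by omega
    rw [hidx2] at haz
    have hapos' : (0:ℝ) < a := hapos
    -- bound: a < 2k+3
    have habd : a < 2*(k:ℝ)+3 := by
      by_contra h
      push_neg at h
      have h1 : (1:ℝ) < a := by linarith
      have h2 : (2*(k+1)+1 : ℝ) ≤ a := by push_cast; linarith
      have := T_odd_neg (k+1) a h1 (by push_cast at h2 ⊢; linarith)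
      linarith [this, haz.ge]
    -- T (2k+1) a < 0
    have hTneg : T (2*k+1) a < 0 := by
      have hexp : T (2*(k+1)+1) a = T (2*k+1) a + a ^ (2*k+2) / (Nat.factorial (2*k+2))
          - a ^ (2*k+3) / (Nat.factorial (2*k+3)) := by
        have hi : 2*(k+1)+1 = (2*k+1)+2 := by ring
        rw [hi, T_succ_succ]
        have heven : (-a) ^ (2*k+1+1) = a ^ (2*k+2) := by
          have : (2*k+1+1) = 2*(k+1) := by ring
          rw [this]
          exact Even.neg_pow ⟨k+1, by ring⟩ a
        have hodd : (-a) ^ (2*k+1+2) = -(a ^ (2*k+3)) := by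
          have : (2*k+1+2) = 2*k+3 := by ring
          rw [this]
          exact Odd.neg_pow ⟨k+1, by ring⟩ a
        rw [heven, hodd]
        have h1 : 2*k+1+1 = 2*k+2 := by ring
        have h2 : 2*k+1+2 = 2*k+3 := by ring
        rw [h1, h2]
        ring
      rw [haz] at hexp
      have hlt : a ^ (2*k+3) / (Nat.factorial (2*k+3)) < a ^ (2*k+2) / (Nat.factorial (2*k+2)) := by
        have hsucc : a ^ (2*k+3) / (Nat.factorial (2*k+3)) =
            a ^ (2*k+2) / (Nat.factorial (2*k+2)) * (a / (2*(k:ℝ)+3)) := by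
          have h1 : 2*k+2+1 = 2*k+3 := by ring
          rw [← h1, pow_div_fact_succ (2*k+2) a]
          push_cast
          ring_nf
        have hfrac : a / (2*(k:ℝ)+3) < 1 := by
          rw [div_lt_one (by positivity)]
          linarith
        have hbase : (0:ℝ) < a ^ (2*k+2) / (Nat.factorial (2*k+2)) := by positivity
        rw [hsucc]
        nlinarith
      linarith
    -- IVT on [0, a]
    have hcont : ContinuousOn (fun x => T (2*k+1) x) (Set.Icc 0 a) := (T_cont _).continuousOn
    have hsub := intermediate_value_Ioo' (le_of_lt hapos') hcont
    have h0mem : (0:ℝ) ∈ Set.Ioo (T (2*k+1) a) ((fun x => T (2*k+1) x) 0) := by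
      constructor
      · exact hTneg
      · simp only [T_zero]
        norm_num
    obtain ⟨x, hx, hTx⟩ := hsub h0mem
    have hidx1 : 2 * (k+1) - 1 = 2*k+1 := by omega
    have hxc : x = c (k+1) := by
      apply huniq (k+1) (by omega) x hx.1
      rw [hidx1]
      exact hTx
    rw [← hxc]
    exact hx.2
end

section
/- For every positive integer m and all real x, T_{2m-2}(x) > T_{2m}(x) if and only if 0 < x < 2m, where T_n(x) = \sum_{k=0}^n (-x)^k / k!. -/
theorem stmt8 (m : ℕ) (hm : 1 ≤ m) (x : ℝ) :
    T (2 * m) x < T (2 * m - 2) x ↔ 0 < x ∧ x < 2 * m := by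
  obtain ⟨j, rfl⟩ : ∃ j, m = j + 1 := ⟨m - 1, by omega⟩
  have h1 : 2 * (j + 1) = 2 * j + 2 := by ring
  have h2 : 2 * j + 2 - 2 = 2 * j := by omega
  rw [h1, h2]
  have hT : T (2 * j + 2) x = T (2 * j) x + (-x) ^ (2 * j + 1) / (Nat.factorial (2 * j + 1))
      + (-x) ^ (2 * j + 2) / (Nat.factorial (2 * j + 2)) := by
    simp only [T]
    rw [Finset.sum_range_succ, Finset.sum_range_succ]
  have hfac : (Nat.factorial (2 * j + 2) : ℝ) = (2 * j + 2) * Nat.factorial (2 * j + 1) := by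
    push_cast [Nat.factorial_succ]; ring
  have hfpos : (0 : ℝ) < Nat.factorial (2 * j + 2) := by positivity
  have hfpos1 : (0 : ℝ) < Nat.factorial (2 * j + 1) := by positivity
  have key : (-x) ^ (2 * j + 1) / (Nat.factorial (2 * j + 1))
      + (-x) ^ (2 * j + 2) / (Nat.factorial (2 * j + 2))
      = x ^ (2 * j + 1) * (x - (2 * j + 2)) / (Nat.factorial (2 * j + 2)) := by
    have e1 : (-x) ^ (2 * j + 1) = -(x ^ (2 * j + 1)) := Odd.neg_pow ⟨j, by ring⟩ x
    have e2 : (-x) ^ (2 * j + 2) = x ^ (2 * j + 2) := Even.neg_pow ⟨j + 1, by ring⟩ x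
    rw [e1, e2, hfac]
    field_simp
    ring
  rw [hT, add_assoc, key]
  have : T (2 * j) x + x ^ (2 * j + 1) * (x - (2 * j + 2)) / (Nat.factorial (2 * j + 2))
      < T (2 * j) x ↔ x ^ (2 * j + 1) * (x - (2 * j + 2)) / (Nat.factorial (2 * j + 2)) < 0 := by
    constructor <;> intro h <;> linarith
  rw [this, div_neg_iff]
  have hodd : Odd (2 * j + 1) := ⟨j, by ring⟩
  constructor
  · rintro (⟨hn, _⟩ | ⟨hpos, hneg⟩)
    · linarith
    · rcases mul_neg_iff.mp hpos with ⟨ha, hb⟩ | ⟨ha, hb⟩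
      · have hx : 0 < x := by
          by_contra hx
          push_neg at hx
          have : x ^ (2 * j + 1) ≤ 0 := Odd.pow_nonpos hodd hx
          linarith
        refine ⟨hx, by push_cast; linarith⟩
      · have hx : x < 0 := by
          by_contra hx
          push_neg at hx
          have : 0 ≤ x ^ (2 * j + 1) := pow_nonneg hx _
          linarith
        have : (0:ℝ) < 2 * j + 2 := by positivity
        linarith
  · rintro ⟨hx, hlt⟩
    right
    refine ⟨mul_neg_of_pos_of_neg (pow_pos hx _) (by push_cast at hlt ⊢; linarith), hfpos⟩
end

section
/- For all real x with 0 < x < 1, the following inequality holds: 1/x^2 - 1/12 < e^{-x}/(1 - e^{-x})^2. -/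
set_option maxHeartbeats 1000000

theorem stmt10 (x : ℝ) (hx1 : 0 < x) (hx2 : x < 1) :
    1 / x ^ 2 - 1 / 12 < Real.exp (-x) / (1 - Real.exp (-x)) ^ 2 := by
  set u : ℝ := x / 2 with hu
  have hu0 : 0 < u := by positivity
  have hu1 : u < 1/2 := by rw [hu]; linarith
  set t : ℝ := Real.exp u with ht
  have ht1 : 1 < t := Real.one_lt_exp_iff.mpr hu0
  have ht0 : 0 < t := by linarith
  -- upper bound on exp u
  have hb := Real.exp_bound (x := u) (by rw [abs_of_pos hu0]; linarith) (n := 6) (by norm_num)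
  rw [abs_of_pos hu0] at hb
  have hsum : ∑ m ∈ Finset.range 6, u ^ m / m.factorial
      = 1 + u + u^2/2 + u^3/6 + u^4/24 + u^5/120 := by
    norm_num [Finset.sum_range_succ, Nat.factorial]
  rw [hsum] at hb
  norm_num [Nat.factorial] at hb
  have hbu : t ≤ 1 + u + u^2/2 + u^3/6 + u^4/24 + u^5/120 + u^6 * (7/4320) := by
    have := (abs_sub_le_iff.1 hb).1
    linarith
  -- lower bound on exp (-u) = 1/t
  have hb2 := Real.exp_bound (x := -u) (by rw [abs_of_neg (by linarith)]; linarith) (n := 6)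
    (by norm_num)
  rw [abs_of_neg (by linarith : -u < 0)] at hb2
  have hsum2 : ∑ m ∈ Finset.range 6, (-u) ^ m / m.factorial
      = 1 - u + u^2/2 - u^3/6 + u^4/24 - u^5/120 := by
    norm_num [Finset.sum_range_succ, Nat.factorial]
    ring
  rw [hsum2] at hb2
  norm_num [Nat.factorial] at hb2
  have hinv : Real.exp (-u) = 1 / t := by rw [Real.exp_neg, ht, inv_eq_one_div]
  rw [hinv] at hb2
  have hbl : 1 - u + u^2/2 - u^3/6 + u^4/24 - u^5/120 - u^6 * (7/4320) ≤ 1 / t := by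
    have := (abs_sub_le_iff.1 hb2).2
    linarith
  -- key bound on 2 sinh u = t - 1/t
  have hw : t - 1/t ≤ 2*u + u^3/3 + u^5/60 + u^6 * (7/2160) := by
    have := sub_le_sub hbu hbl
    linarith
  have hw0 : 0 < t - 1/t := by
    have : 1/t < 1 := by rw [div_lt_one ht0]; linarith
    linarith
  -- polynomial inequality
  have hpoly : (12 - 4*u^2) * (2*u + u^3/3 + u^5/60 + u^6 * (7/2160))^2 < 48 * u^2 := by
    nlinarith [pow_pos hu0 6, pow_pos hu0 7, pow_pos hu0 8, sq_nonneg u, mul_pos hu0 hu0,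
      pow_pos hu0 3, sq_nonneg (u^3), sq_nonneg (u^4)]
  -- hence the core inequality
  have hfac : t^2 - 1 = t * (t - 1/t) := by field_simp
  have hgoal : (12 - x ^ 2) * (t ^ 2 - 1) ^ 2 < 12 * x ^ 2 * t ^ 2 := by
    have hx4 : x = 2 * u := by rw [hu]; ring
    rw [hx4, hfac]
    have h1 : (t - 1/t)^2 ≤ (2*u + u^3/3 + u^5/60 + u^6 * (7/2160))^2 :=
      pow_le_pow_left₀ hw0.le hw 2
    have h2 : (0:ℝ) < 12 - 4*u^2 := by nlinarith
    have ht2 : (0:ℝ) < t^2 := by positivity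
    calc (12 - (2*u) ^ 2) * (t * (t - 1/t)) ^ 2
        = t^2 * ((12 - 4*u^2) * (t - 1/t)^2) := by ring
      _ ≤ t^2 * ((12 - 4*u^2) * (2*u + u^3/3 + u^5/60 + u^6 * (7/2160))^2) := by
          exact mul_le_mul_of_nonneg_left
            (mul_le_mul_of_nonneg_left h1 h2.le) (by positivity)
      _ < t^2 * (48 * u^2) := by exact (mul_lt_mul_iff_right₀ ht2).mpr hpoly
      _ = 12 * (2*u) ^ 2 * t ^ 2 := by ring
  -- convert goal
  have h2 : t ^ 2 = Real.exp x := by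
    rw [ht, sq, ← Real.exp_add]; congr 1; rw [hu]; ring
  have ht2 : (1:ℝ) < t ^ 2 := by rw [sq]; exact one_lt_mul_of_lt_of_le ht1 ht1.le
  have hex : Real.exp (-x) = 1 / t ^ 2 := by
    rw [Real.exp_neg, ← h2, inv_eq_one_div]
  rw [hex]
  have hne : (1 : ℝ) - 1 / t ^ 2 = (t ^ 2 - 1) / t ^ 2 := by field_simp
  rw [hne, div_pow]
  have h20 : (0:ℝ) < t ^ 2 - 1 := by linarith
  have hrhs : 1 / t ^ 2 / ((t ^ 2 - 1) ^ 2 / (t ^ 2) ^ 2) = t ^ 2 / (t ^ 2 - 1) ^ 2 := by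
    field_simp
  rw [hrhs]
  have hx2pos : (0:ℝ) < x ^ 2 := by positivity
  have hlhs : 1 / x ^ 2 - 1 / 12 = (12 - x ^ 2) / (12 * x ^ 2) := by
    rw [div_sub_div _ _ (by positivity : (x:ℝ) ^ 2 ≠ 0) (by norm_num : (12:ℝ) ≠ 0)]
    rw [div_eq_div_iff (by positivity) (by positivity)]
    ring
  rw [hlhs, div_lt_div_iff₀ (by positivity) (by positivity)]
  nlinarith [hgoal]
end

section
/- For all real x with 0 < x < 1, e^{-x}/(1 - e^{-x})^2 < 1/x^2 - (e^2 - 3e + 1)/(e^2 - 2e + 1). -/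
open Real

lemma sinh_lb (t : ℝ) (ht : 0 < t) (ht2 : t ≤ 1/2) :
    t + t^3/6 + t^5/240 ≤ Real.sinh t := by
  have h1 : ∑ i ∈ Finset.range 6, t ^ i / i.factorial ≤ Real.exp t :=
    Real.sum_le_exp_of_nonneg ht.le 6
  have h2 : |Real.exp (-t) - ∑ m ∈ Finset.range 6, (-t) ^ m / m.factorial|
      ≤ |(-t)| ^ 6 * ((6:ℕ).succ / ((6:ℕ).factorial * 6)) :=
    Real.exp_bound (by rw [abs_neg, abs_of_pos ht]; linarith) (by norm_num)
  rw [abs_neg, abs_of_pos ht] at h2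
  have h2' := (abs_sub_le_iff.1 h2).1
  simp only [Finset.sum_range_succ, Finset.sum_range_zero, Nat.factorial] at h1 h2'
  have h65 : t^6 ≤ t^5/2 := by
    nlinarith [mul_nonneg (pow_nonneg ht.le 5) (by linarith : (0:ℝ) ≤ 1/2 - t)]
  have h5 : (0:ℝ) ≤ t^5 := pow_nonneg ht.le 5
  rw [Real.sinh_eq]
  push_cast at h1 h2' ⊢
  ring_nf at h1 h2' ⊢
  linarith

lemma cosh_ub (t : ℝ) (ht : 0 < t) (ht2 : t ≤ 1/2) :
    Real.cosh t ≤ 1 + t^2/2 + t^4/23 := by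
  have h1 : |Real.exp t - ∑ m ∈ Finset.range 6, t ^ m / m.factorial|
      ≤ |t| ^ 6 * ((6:ℕ).succ / ((6:ℕ).factorial * 6)) :=
    Real.exp_bound (by rw [abs_of_pos ht]; linarith) (by norm_num)
  have h2 : |Real.exp (-t) - ∑ m ∈ Finset.range 6, (-t) ^ m / m.factorial|
      ≤ |(-t)| ^ 6 * ((6:ℕ).succ / ((6:ℕ).factorial * 6)) :=
    Real.exp_bound (by rw [abs_neg, abs_of_pos ht]; linarith) (by norm_num)
  rw [abs_of_pos ht] at h1
  rw [abs_neg, abs_of_pos ht] at h2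
  have h1' := (abs_sub_le_iff.1 h1).1
  have h2' := (abs_sub_le_iff.1 h2).1
  simp only [Finset.sum_range_succ, Finset.sum_range_zero, Nat.factorial] at h1' h2'
  have h64 : t^6 ≤ t^4/4 := by
    nlinarith [mul_nonneg (mul_nonneg (pow_nonneg ht.le 4) (by linarith : (0:ℝ) ≤ 1/2 - t))
      (by linarith : (0:ℝ) ≤ 1/2 + t)]
  have h4 : (0:ℝ) ≤ t^4 := pow_nonneg ht.le 4
  rw [Real.cosh_eq]
  push_cast at h1' h2' ⊢
  ring_nf at h1' h2' ⊢
  linarith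

lemma key (t : ℝ) (ht : 0 < t) (ht2 : t ≤ 1/2) :
    t^3 * Real.cosh t < Real.sinh t ^ 3 := by
  have hs := sinh_lb t ht ht2
  have hc := cosh_ub t ht ht2
  have hL : 0 < t + t^3/6 + t^5/240 := by positivity
  calc t^3 * Real.cosh t ≤ t^3 * (1 + t^2/2 + t^4/23) := by nlinarith [pow_pos ht 3]
    _ < (t + t^3/6 + t^5/240)^3 := by nlinarith [pow_pos ht 4, pow_pos ht 2, sq_nonneg t, pow_pos ht 6, pow_pos ht 8, pow_pos ht 10, pow_pos ht 15, pow_pos ht 7, pow_pos ht 9, pow_pos ht 11, pow_pos ht 13]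
    _ ≤ Real.sinh t ^ 3 := by gcongr

open Set

noncomputable def f (y : ℝ) : ℝ := (y^2)⁻¹ - (2*(Real.cosh y - 1))⁻¹

lemma f_hasDeriv (y : ℝ) (hy : y ≠ 0) :
    HasDerivAt f (-(2*y)/(y^2)^2 + (2*Real.sinh y)/(2*(Real.cosh y - 1))^2) y := by
  have hc : (1:ℝ) < Real.cosh y := Real.one_lt_cosh.2 hy
  have h1 : HasDerivAt (fun y : ℝ => (y^2)⁻¹) (-(2*y)/(y^2)^2) y := by
    have := (hasDerivAt_pow 2 y).inv (pow_ne_zero 2 hy)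
    simp at this
    exact this
  have h2 : HasDerivAt (fun y : ℝ => (2*(Real.cosh y - 1))⁻¹)
      (-(2*Real.sinh y)/(2*(Real.cosh y - 1))^2) y := by
    have hne : 2*(Real.cosh y - 1) ≠ 0 := by nlinarith
    have hd : HasDerivAt (fun y : ℝ => 2*(Real.cosh y - 1)) (2*Real.sinh y) y := by
      simpa using ((Real.hasDerivAt_cosh y).sub_const 1).const_mul 2
    exact hd.inv hne
  have h3 := h1.sub h2
  show HasDerivAt (fun y : ℝ => (y^2)⁻¹ - (2*(Real.cosh y - 1))⁻¹) _ y
  exact h3.congr_deriv (by ring)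

lemma myDerivNeg (y : ℝ) (hy : 0 < y) (hy1 : y ≤ 1) : deriv f y < 0 := by
  have hc : (1:ℝ) < Real.cosh y := Real.one_lt_cosh.2 hy.ne'
  rw [(f_hasDeriv y hy.ne').deriv]
  set t := y/2 with htdef
  have hyt : y = 2*t := by rw [htdef]; ring
  have ht : 0 < t := by rw [htdef]; linarith
  have ht2 : t ≤ 1/2 := by rw [htdef]; linarith
  have hkey := key t ht ht2
  have hs : 0 < Real.sinh t := Real.sinh_pos_iff.2 ht
  have hct : 0 < Real.cosh t := Real.cosh_pos t
  have hcy : Real.cosh y = 2 * Real.sinh t^2 + 1 := by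
    have h1 := Real.cosh_two_mul t
    have hsq := Real.cosh_sq t
    rw [← hyt] at h1
    nlinarith
  have hsy : Real.sinh y = 2 * Real.sinh t * Real.cosh t := by
    have := Real.sinh_two_mul t
    rwa [← hyt] at this
  rw [hcy, hsy, hyt]
  have e2 : 2*(2*Real.sinh t*Real.cosh t)/(2*(2*Real.sinh t^2+1-1))^2
      = Real.cosh t/(4*Real.sinh t^3) := by
    have hden : (0:ℝ) < (2*(2*Real.sinh t^2+1-1))^2 := by
      have h : 2*(2*Real.sinh t^2+1-1) = 4*Real.sinh t^2 := by ring
      rw [h]; positivity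
    rw [div_eq_div_iff hden.ne' (by positivity)]; ring
  rw [e2]
  have e1 : -(2*(2*t))/((2*t)^2)^2 = -(1/(4*t^3)) := by
    rw [neg_div, neg_eq_iff_eq_neg, neg_neg, div_eq_div_iff (by positivity) (by positivity)]
    ring
  rw [e1]
  rw [neg_add_lt_iff_lt_add, add_zero, div_lt_div_iff₀ (by positivity) (by positivity)]
  nlinarith


theorem stmt11 (x : ℝ) (hx1 : 0 < x) (hx2 : x < 1) :
    Real.exp (-x) / (1 - Real.exp (-x)) ^ 2 <
      1 / x ^ 2 - (Real.exp 1 ^ 2 - 3 * Real.exp 1 + 1) /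
        (Real.exp 1 ^ 2 - 2 * Real.exp 1 + 1) := by
  have he : (1:ℝ) < Real.exp 1 := by have := Real.add_one_le_exp 1; linarith
  have hcont : ContinuousOn f (Icc x 1) := by
    apply ContinuousOn.sub
    · apply ContinuousOn.inv₀ (by fun_prop)
      intro y hy
      have : 0 < y := lt_of_lt_of_le hx1 hy.1
      positivity
    · apply ContinuousOn.inv₀ (by fun_prop)
      intro y hy
      have : (1:ℝ) < Real.cosh y := Real.one_lt_cosh.2 (lt_of_lt_of_le hx1 hy.1).ne'
      nlinarith
  have hmono : StrictAntiOn f (Icc x 1) := by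
    apply strictAntiOn_of_deriv_neg (convex_Icc x 1) hcont
    intro y hy
    rw [interior_Icc] at hy
    exact myDerivNeg y (lt_trans hx1 hy.1) hy.2.le
  have hlt : f 1 < f x :=
    hmono (left_mem_Icc.2 hx2.le) (right_mem_Icc.2 hx2.le) hx2
  have hc1 : (1:ℝ) < Real.cosh 1 := Real.one_lt_cosh.2 one_ne_zero
  have hcx : (1:ℝ) < Real.cosh x := Real.one_lt_cosh.2 hx1.ne'
  have hA : (Real.exp 1 ^ 2 - 3 * Real.exp 1 + 1) / (Real.exp 1 ^ 2 - 2 * Real.exp 1 + 1)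
      = 1 - (2*(Real.cosh 1 - 1))⁻¹ := by
    rw [Real.cosh_eq, Real.exp_neg]
    set u := Real.exp 1 with hu
    have h0 : u ≠ 0 := Real.exp_ne_zero 1
    have hne : u - 1 ≠ 0 := by intro h; apply (by linarith : (1:ℝ) < u).ne'; linarith
    have e1 : 2*((u+u⁻¹)/2 - 1) = (u-1)^2/u := by field_simp; ring
    rw [e1, inv_div]
    have h2 : u^2 - 2*u + 1 = (u-1)^2 := by ring
    rw [h2]
    field_simp
    ring
  have hB : Real.exp (-x) / (1 - Real.exp (-x)) ^ 2 = (2*(Real.cosh x - 1))⁻¹ := by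
    rw [Real.cosh_eq, Real.exp_neg]
    set u := Real.exp x with hu
    have hgt : (1:ℝ) < u := by
      have := Real.add_one_le_exp x; rw [hu]; linarith
    have h0 : u ≠ 0 := by positivity
    have hne : u - 1 ≠ 0 := by intro h; apply hgt.ne'; linarith
    have e1 : 2*((u+u⁻¹)/2 - 1) = (u-1)^2/u := by field_simp; ring
    rw [e1, inv_div]
    have h1 : 1 - u⁻¹ ≠ 0 := by
      have : u⁻¹ < 1 := by rw [inv_lt_one_iff₀]; right; exact hgt
      intro h; linarith
    rw [div_eq_div_iff (by positivity) (by positivity)]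
    field_simp
  rw [hA, hB]
  have hfx : f x = (x^2)⁻¹ - (2*(Real.cosh x - 1))⁻¹ := rfl
  have hf1 : f 1 = 1 - (2*(Real.cosh 1 - 1))⁻¹ := by
    simp [f]
  rw [hfx, hf1] at hlt
  rw [one_div]
  linarith
end

section
/- The function \varphi(x) = 1/x^2 - e^{-x}/(1 - e^{-x})^2 is strictly decreasing on the interval (0, 1). -/
open Real

/-- Key polynomial-exponential inequality. -/
lemma key_ineq (x : ℝ) (hx0 : 0 < x) (hx1 : x ≤ 1) :
    x ^ 3 * (Real.exp x * (Real.exp x + 1)) < 2 * (Real.exp x - 1) ^ 3 := by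
  have hyp : (0:ℝ) < Real.exp x := Real.exp_pos x
  have hL : 1 + x + x^2/2 + x^3/6 + x^4/24 + x^5/120 + x^6/720 ≤ Real.exp x := by
    have h := Real.sum_le_exp_of_nonneg hx0.le 7
    simp [Finset.sum_range_succ, Nat.factorial] at h
    nlinarith [h]
  have hU : Real.exp x ≤ 1 + x + x^2/2 + x^3/6 + x^4/24 + x^5/120 + x^6/720 + x^7/4410 := by
    have h := Real.exp_bound' hx0.le hx1 (n := 7) (by norm_num)
    simp [Finset.sum_range_succ, Nat.factorial] at h
    nlinarith [h]
  have hq0 : (0:ℝ) < 1 + x/2 + x^2/6 + x^3/24 + x^4/120 + x^5/720 := by positivity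
  have hxq : x * (1 + x/2 + x^2/6 + x^3/24 + x^4/120 + x^5/720) ≤ Real.exp x - 1 := by
    nlinarith [hL]
  have hxq0 : 0 < x * (1 + x/2 + x^2/6 + x^3/24 + x^4/120 + x^5/720) := by positivity
  have hcube : (x * (1 + x/2 + x^2/6 + x^3/24 + x^4/120 + x^5/720)) ^ 3
      ≤ (Real.exp x - 1) ^ 3 := pow_le_pow_left₀ hxq0.le hxq 3
  have hUy : Real.exp x * (Real.exp x + 1)
      ≤ (1 + x + x^2/2 + x^3/6 + x^4/24 + x^5/120 + x^6/720 + x^7/4410)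
        * ((1 + x + x^2/2 + x^3/6 + x^4/24 + x^5/120 + x^6/720 + x^7/4410) + 1) := by
    nlinarith [hU, hyp]
  have hP : (0:ℝ) < x ^ 4 * (1/120 + x/80 + 37*x^2/4320 + 541*x^3/141120 + 53*x^4/39200
          + 43*x^5/112896 + 781*x^6/8467200 + 317*x^7/16934400 + 67*x^8/21168000
          + 73*x^9/169344000 + 1121*x^10/24893568000 + x^11/186624000) := by positivity
  have hpoly : (1 + x + x^2/2 + x^3/6 + x^4/24 + x^5/120 + x^6/720 + x^7/4410)
        * ((1 + x + x^2/2 + x^3/6 + x^4/24 + x^5/120 + x^6/720 + x^7/4410) + 1)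
      < 2 * (1 + x/2 + x^2/6 + x^3/24 + x^4/120 + x^5/720) ^ 3 := by
    nlinarith [hP]
  have hx3 : (0:ℝ) < x ^ 3 := by positivity
  calc x ^ 3 * (Real.exp x * (Real.exp x + 1))
      ≤ x ^ 3 * ((1 + x + x^2/2 + x^3/6 + x^4/24 + x^5/120 + x^6/720 + x^7/4410)
        * ((1 + x + x^2/2 + x^3/6 + x^4/24 + x^5/120 + x^6/720 + x^7/4410) + 1)) :=
        mul_le_mul_of_nonneg_left hUy hx3.le
    _ < x ^ 3 * (2 * (1 + x/2 + x^2/6 + x^3/24 + x^4/120 + x^5/720) ^ 3) :=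
        mul_lt_mul_of_pos_left hpoly hx3
    _ = 2 * (x * (1 + x/2 + x^2/6 + x^3/24 + x^4/120 + x^5/720)) ^ 3 := by ring
    _ ≤ 2 * (Real.exp x - 1) ^ 3 := by linarith [hcube]

lemma deriv_form (x : ℝ) (hx0 : 0 < x) :
    HasDerivAt (fun x : ℝ => 1 / x ^ 2 - Real.exp (-x) / (1 - Real.exp (-x)) ^ 2)
      (-2 / x ^ 3 + Real.exp (-x) * (1 + Real.exp (-x)) / (1 - Real.exp (-x)) ^ 3) x := by
  have hxne : x ≠ 0 := hx0.ne'
  have hg0 : 0 < Real.exp (-x) := Real.exp_pos _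
  have hg1 : Real.exp (-x) < 1 := by
    rw [Real.exp_lt_one_iff]; linarith
  have hA : (0:ℝ) < 1 - Real.exp (-x) := by linarith
  have hg : HasDerivAt (fun x : ℝ => Real.exp (-x)) (-Real.exp (-x)) x := by
    simpa [Function.comp_def] using (Real.hasDerivAt_exp (-x)).comp x ((hasDerivAt_id x).neg)
  have h1 : HasDerivAt (fun x : ℝ => 1 / x ^ 2)
      ((0 * x ^ 2 - 1 * (↑2 * x ^ (2-1))) / (x ^ 2) ^ 2) x :=
    (hasDerivAt_const x (1:ℝ)).div (hasDerivAt_pow 2 x) (pow_ne_zero 2 hxne)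
  have hden : HasDerivAt (fun x : ℝ => (1 - Real.exp (-x)) ^ 2)
      (↑2 * (1 - Real.exp (-x)) ^ (2-1) * (0 - -Real.exp (-x))) x :=
    HasDerivAt.fun_pow ((hasDerivAt_const x (1:ℝ)).sub hg) 2
  have h2 := hg.div hden (pow_ne_zero 2 hA.ne')
  have h := h1.sub h2
  refine h.congr_deriv ?_
  have hAne : (1 : ℝ) - Real.exp (-x) ≠ 0 := hA.ne'
  field_simp
  ring

theorem stmt12 :
    StrictAntiOn (fun x : ℝ => 1 / x ^ 2 - Real.exp (-x) / (1 - Real.exp (-x)) ^ 2)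
      (Set.Ioo (0 : ℝ) 1) := by
  apply strictAntiOn_of_deriv_neg (convex_Ioo 0 1)
  · exact fun x hx => ((deriv_form x hx.1).continuousAt).continuousWithinAt
  · intro x hx
    rw [interior_Ioo] at hx
    obtain ⟨hx0, hx1⟩ := hx
    rw [(deriv_form x hx0).deriv]
    have hg0 : 0 < Real.exp (-x) := Real.exp_pos _
    have hg1 : Real.exp (-x) < 1 := by rw [Real.exp_lt_one_iff]; linarith
    have hA : (0:ℝ) < 1 - Real.exp (-x) := by linarith
    have hyp : (0:ℝ) < Real.exp x := Real.exp_pos x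
    have hgy : Real.exp (-x) = (Real.exp x)⁻¹ := Real.exp_neg x
    have key := key_ineq x hx0 hx1.le
    have hlt : Real.exp (-x) * (1 + Real.exp (-x)) / (1 - Real.exp (-x)) ^ 3
        < 2 / x ^ 3 := by
      rw [div_lt_div_iff₀ (by positivity) (by positivity)]
      have e1 : Real.exp (-x) * (1 + Real.exp (-x)) * x ^ 3 * (Real.exp x) ^ 3
          = x ^ 3 * (Real.exp x * (Real.exp x + 1)) := by
        rw [hgy]; field_simp
      have e2 : 2 * (1 - Real.exp (-x)) ^ 3 * (Real.exp x) ^ 3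
          = 2 * (Real.exp x - 1) ^ 3 := by
        rw [hgy]; field_simp
      have h3 : (0:ℝ) < (Real.exp x) ^ 3 := by positivity
      nlinarith [key, h3, e1, e2]
    have hsplit : -2 / x ^ 3 = -(2 / x ^ 3) := by ring
    linarith [hlt, hsplit.ge, hsplit.le]
end

section
/- For all real x with 0 < x < 1, the inequality g(x) = -x^3 e^{-2x} - x^3 e^{-x} - 2e^{-3x} + 6e^{-2x} - 6e^{-x} + 2 > 0 holds. -/
set_option maxHeartbeats 1000000 in
private lemma stmt13_poly (u : ℝ) (hu0 : 0 < u) (hu1 : u < 1/2) :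
    2*(2*u + u^3/3 - u^5/100)^3 > 8*u^3*(2 + u^2 + u^4/12 + u^5/50) := by
  nlinarith [pow_pos hu0 3, pow_pos hu0 4, pow_pos hu0 5, pow_pos hu0 6, pow_pos hu0 7,
    pow_pos hu0 8, pow_pos hu0 9, sq_nonneg u, sq_nonneg (u^2), sq_nonneg (u^3),
    mul_pos (pow_pos hu0 7) (sub_pos.2 hu1), mul_pos (pow_pos hu0 8) (sub_pos.2 hu1),
    mul_pos (mul_pos (pow_pos hu0 7) (sub_pos.2 hu1)) (sub_pos.2 hu1)]

set_option maxHeartbeats 1000000 in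
theorem stmt13 (x : ℝ) (hx1 : 0 < x) (hx2 : x < 1) :
    -x ^ 3 * Real.exp (-2 * x) - x ^ 3 * Real.exp (-x) - 2 * Real.exp (-3 * x)
      + 6 * Real.exp (-2 * x) - 6 * Real.exp (-x) + 2 > 0 := by
  set u : ℝ := x/2 with hu
  have hu0 : 0 < u := by positivity
  have hu1 : u < 1/2 := by simp [hu]; linarith
  set A := Real.exp u with hA
  set B := Real.exp (-u) with hB
  have hB0 : 0 < B := Real.exp_pos _
  have hA0 : 0 < A := Real.exp_pos _
  have hAB : A * B = 1 := by rw [hA, hB, ← Real.exp_add]; simp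
  have e1 : Real.exp (-x) = B ^ 2 := by
    rw [hB, ← Real.exp_nat_mul]; norm_num; ring_nf; linarith
  have e2 : Real.exp (-2 * x) = B ^ 4 := by
    rw [hB, ← Real.exp_nat_mul]; norm_num; ring_nf; linarith
  have e3 : Real.exp (-3 * x) = B ^ 6 := by
    rw [hB, ← Real.exp_nat_mul]; norm_num; ring_nf; linarith
  rw [e1, e2, e3]
  -- Taylor bounds
  have hAlo : 1 + u + u^2/2 + u^3/6 + u^4/24 ≤ A := by
    have := Real.sum_le_exp_of_nonneg hu0.le 5
    simp [Finset.sum_range_succ] at this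
    norm_num [Nat.factorial] at this
    linarith
  have hBb := Real.exp_bound (x := -u) (by rw [abs_neg, abs_of_pos hu0]; linarith)
    (n := 5) (by norm_num)
  simp [Finset.sum_range_succ, abs_neg, abs_of_pos hu0] at hBb
  norm_num [Nat.factorial] at hBb
  rw [abs_le] at hBb
  obtain ⟨hBlo, hBhi⟩ := hBb
  have hAhi : A ≤ 1 + u + u^2/2 + u^3/6 + u^4/24 + u^5/100 := by
    have := Real.exp_bound' hu0.le (by linarith) (n := 5) (by norm_num)
    simp [Finset.sum_range_succ] at this
    norm_num [Nat.factorial] at this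
    linarith
  have hs : 2*u + u^3/3 - u^5/100 ≤ A - B := by linarith
  have h5 : u^5 < u^3 := by
    nlinarith [mul_pos (pow_pos hu0 3) (show (0:ℝ) < 1 - u^2 by nlinarith)]
  have hs0 : 0 < 2*u + u^3/3 - u^5/100 := by nlinarith [pow_pos hu0 3]
  have hc : A + B ≤ 2 + u^2 + u^4/12 + u^5/50 := by linarith
  have hpoly := stmt13_poly u hu0 hu1
  have hcube : (2*u + u^3/3 - u^5/100)^3 ≤ (A - B)^3 := pow_le_pow_left₀ hs0.le hs 3
  have hx3 : x^3 = 8*u^3 := by rw [hu]; ring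
  have key : 2 * (A - B)^3 - x^3 * (A + B) > 0 := by
    have h8 : (0:ℝ) ≤ 8*u^3 := by positivity
    rw [hx3]
    linarith [mul_le_mul_of_nonneg_left hc h8]
  have hEq : -x ^ 3 * B ^ 4 - x ^ 3 * B ^ 2 - 2 * B ^ 6 + 6 * B ^ 4 - 6 * B ^ 2 + 2
      = B ^ 3 * (2 * (A - B)^3 - x^3 * (A + B)) := by
    linear_combination (-(2*(1 + A*B + (A*B)^2) - 6*B^2*(1 + A*B) + 6*B^4 - x^3*B^2)) * hAB
  rw [hEq]
  exact mul_pos (by positivity) key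
end

section
/- For all real a \le 0 and all real x with 0 \le x \le 1, it holds that e^{ax} \ge ax(1-x) + x^2(e^a - 1) + 1. -/
theorem stmt16 (a : ℝ) (ha : a ≤ 0) (x : ℝ) (hx1 : 0 ≤ x) (hx2 : x ≤ 1) :
    Real.exp (a * x) ≥ a * x * (1 - x) + x ^ 2 * (Real.exp a - 1) + 1 := by
  set g : ℝ → ℝ := fun t => Real.exp (t * x) - 1 - t * x - x ^ 2 * (Real.exp t - 1 - t) with hg
  -- convexity: exp (t*x) ≤ 1 + x*(exp t - 1) for x ∈ [0,1]
  have hconv : ∀ t : ℝ, Real.exp (t * x) ≤ 1 + x * (Real.exp t - 1) := by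
    intro t
    have := convexOn_exp.2 (Set.mem_univ (0 : ℝ)) (Set.mem_univ t)
      (by linarith : (0:ℝ) ≤ 1 - x) hx1 (by ring)
    simp only [smul_eq_mul, mul_zero, zero_add] at this
    have h0 : Real.exp 0 = 1 := Real.exp_zero
    calc Real.exp (t * x) = Real.exp (x * t) := by ring_nf
      _ ≤ (1 - x) * Real.exp 0 + x * Real.exp t := this
      _ = 1 + x * (Real.exp t - 1) := by rw [h0]; ring
  have hd : ∀ t : ℝ, HasDerivAt g (x * Real.exp (t * x) - x - x ^ 2 * (Real.exp t - 1)) t := by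
    intro t
    have h1 : HasDerivAt (fun t : ℝ => t * x) x t := by
      simpa using (hasDerivAt_id t).mul_const x
    have h2 : HasDerivAt (fun t : ℝ => Real.exp (t * x)) (Real.exp (t * x) * x) t :=
      h1.exp
    have h3 : HasDerivAt (fun t : ℝ => Real.exp t - 1 - t) (Real.exp t - 1) t := by
      simpa using ((Real.hasDerivAt_exp t).sub_const 1).fun_sub (hasDerivAt_id t)
    have := ((h2.sub_const 1).fun_sub h1).fun_sub (h3.const_mul (x ^ 2))
    convert this using 1
    exacts [rfl, rfl, by ring]
  have hanti : AntitoneOn g (Set.Iic (0 : ℝ)) := by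
    apply antitoneOn_of_deriv_nonpos (convex_Iic 0)
    · exact fun t _ => ((hd t).continuousAt).continuousWithinAt
    · exact fun t _ => ((hd t).differentiableAt).differentiableWithinAt
    · intro t _
      rw [(hd t).deriv]
      have := hconv t
      nlinarith [hx1, hx2, this]
  have h0 : g 0 = 0 := by simp [hg]
  have hga : g 0 ≤ g a := hanti (Set.mem_Iic.2 ha) (Set.mem_Iic.2 le_rfl) ha
  rw [h0] at hga
  simp only [hg] at hga
  nlinarith [hga]
end

section
/- For all real a \ge 0 and all real x with 0 \le x \le 1, it holds that e^{ax} \le ax(1-x) + x^2(e^a - 1) + 1. -/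
lemma exp_eq_tsum' (t : ℝ) : Real.exp t = 1 + t + ∑' n : ℕ, t^(n+2)/((n+2).factorial : ℝ) := by
  have h := Real.summable_pow_div_factorial t
  have := Summable.sum_add_tsum_nat_add (f := fun n => t ^ n / (n.factorial : ℝ)) 2 h
  beta_reduce at this
  rw [Real.exp_eq_exp_ℝ, NormedSpace.exp_eq_tsum_div]
  beta_reduce
  rw [← this]
  simp [Finset.sum_range_succ]

theorem stmt17 (a : ℝ) (ha : 0 ≤ a) (x : ℝ) (hx1 : 0 ≤ x) (hx2 : x ≤ 1) :
    Real.exp (a * x) ≤ a * x * (1 - x) + x ^ 2 * (Real.exp a - 1) + 1 := by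
  have hax : Summable (fun n : ℕ => (a*x)^(n+2)/((n+2).factorial : ℝ)) :=
    (Real.summable_pow_div_factorial (a*x)).comp_injective (add_left_injective 2)
  have hA : Summable (fun n : ℕ => a^(n+2)/((n+2).factorial : ℝ)) :=
    (Real.summable_pow_div_factorial a).comp_injective (add_left_injective 2)
  have key : (∑' n : ℕ, (a*x)^(n+2)/((n+2).factorial : ℝ))
      ≤ x^2 * ∑' n : ℕ, a^(n+2)/((n+2).factorial : ℝ) := by
    rw [← tsum_mul_left]
    refine Summable.tsum_le_tsum (fun n => ?_) hax (hA.mul_left _)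
    have hx : x^(n+2) ≤ x^2 := pow_le_pow_of_le_one hx1 hx2 (by omega)
    have hfac : (0:ℝ) < ((n+2).factorial : ℝ) := by positivity
    calc (a*x)^(n+2)/((n+2).factorial : ℝ)
        = (a^(n+2)/((n+2).factorial : ℝ)) * x^(n+2) := by rw [mul_pow]; ring
      _ ≤ (a^(n+2)/((n+2).factorial : ℝ)) * x^2 := by
          apply mul_le_mul_of_nonneg_left hx (by positivity)
      _ = x^2 * (a^(n+2)/((n+2).factorial : ℝ)) := by ring
  rw [exp_eq_tsum' (a*x), exp_eq_tsum' a]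
  nlinarith [key]
end

section
/- For all real a > 0 and all real x with x > 1, it holds that e^{ax} \ge ax(1-x) + x^2(e^a - 1) + 1, and for a < 0 and x > 1 the reverse inequality e^{ax} \le ax(1-x) + x^2(e^a - 1) + 1 holds. -/
open Real

/-- Bernoulli-type: for `1 ≤ x`, `x * (exp t - 1) ≤ exp (t * x) - 1`. -/
lemma bern_exp {x : ℝ} (hx : 1 ≤ x) (t : ℝ) :
    x * (Real.exp t - 1) ≤ Real.exp (t * x) - 1 := by
  have h := one_add_mul_self_le_rpow_one_add (s := Real.exp t - 1)
    (by nlinarith [Real.exp_pos t]) (p := x) hx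
  rw [add_sub_cancel] at h
  rw [← Real.exp_log (Real.exp_pos t), ← Real.exp_mul, Real.log_exp] at h
  linarith

lemma key_s19 {x : ℝ} (hx : 1 < x) :
    MonotoneOn (fun t : ℝ => Real.exp (t * x) - t * x - 1
      - x ^ 2 * (Real.exp t - t - 1)) Set.univ := by
  have hx0 : (0:ℝ) < x := by linarith
  apply monotoneOn_of_deriv_nonneg convex_univ
  · fun_prop
  · apply Differentiable.differentiableOn; fun_prop
  · intro t _
    have hd : deriv (fun t : ℝ => Real.exp (t * x) - t * x - 1
        - x ^ 2 * (Real.exp t - t - 1)) t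
        = Real.exp (t * x) * x - x - x ^ 2 * (Real.exp t - 1) := by
      have : HasDerivAt (fun t : ℝ => Real.exp (t * x) - t * x - 1
          - x ^ 2 * (Real.exp t - t - 1))
          (Real.exp (t * x) * x - x - x ^ 2 * (Real.exp t - 1)) t := by
        have h1 : HasDerivAt (fun t : ℝ => t * x) x t := hasDerivAt_mul_const x
        have h2 : HasDerivAt (fun t : ℝ => Real.exp (t * x)) (Real.exp (t * x) * x) t :=
          by have := (Real.hasDerivAt_exp (t * x)).comp t h1; exact this
        have h3 : HasDerivAt (fun t : ℝ => Real.exp t - t - 1) (Real.exp t - 1 - 0) t :=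
          ((Real.hasDerivAt_exp t).sub (hasDerivAt_id t)).sub (hasDerivAt_const t 1)
        have := ((h2.sub h1).sub (hasDerivAt_const t 1)).sub (h3.const_mul (x ^ 2))
        exact this.congr_deriv (by ring)
      exact this.deriv
    rw [hd]
    have hb := bern_exp hx.le t
    nlinarith [hb, hx0]

theorem stmt19 (a : ℝ) (x : ℝ) (hx : 1 < x) :
    (0 < a → Real.exp (a * x) ≥ a * x * (1 - x) + x ^ 2 * (Real.exp a - 1) + 1) ∧
    (a < 0 → Real.exp (a * x) ≤ a * x * (1 - x) + x ^ 2 * (Real.exp a - 1) + 1) := by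
  have hmono := key_s19 hx
  constructor
  · intro ha
    have h := hmono (Set.mem_univ 0) (Set.mem_univ a) ha.le
    simp only [zero_mul, Real.exp_zero] at h
    nlinarith [h]
  · intro ha
    have h := hmono (Set.mem_univ a) (Set.mem_univ 0) ha.le
    simp only [zero_mul, Real.exp_zero] at h
    nlinarith [h]
end
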